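/- Let X and Y be locally compact Hausdorff spaces, let φ : ℂ × ℂ → [0,∞) be a continuous map satisfying (inc), let ρ be either ρ₊ or ρ_max, let A ⊆ C₀(X) and B ⊆ C₀(Y), and let T : A → B be a map satisfying ρ(Tf, Tg) = ρ(f,g) for all f, g ∈ A. Then ‖Tf‖_Y = ‖f‖_X for every f ∈ A. -/

import Mathlib

open scoped ZeroAtInfty Pointwise
open Filter Topology

set_option maxHeartbeats 1000000
set_option synthInstance.maxHeartbeats 1000000

/-- The (inc) property for a two-variable function `φ : ℂ → ℂ → ℝ`. -/
def IncProp (φ : ℂ → ℂ → ℝ) : Prop :=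
  (∀ s₁ s₂ t : ℂ, ‖s₁‖ ≤ ‖s₂‖ →
      φ s₁ t ≤ φ s₂ t ∧ φ t s₁ ≤ φ t s₂) ∧
  (∀ s₁ s₂ t : ℂ, ‖s₁‖ < ‖s₂‖ → t ≠ 0 →
      φ s₁ t < φ s₂ t ∧ φ t s₁ < φ t s₂)

/-- The (con) property. -/
def ConProp (φ : ℂ → ℂ → ℝ) : Prop :=
  ∀ (n : ℕ), 0 < n → ∀ (s : Fin n → ℂ) (t : ℂ),
    φ ((1 / (n : ℂ)) * ∑ i, s i) t ≤ (1 / (n : ℝ)) * ∑ i, φ (s i) t ∧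
    φ t ((1 / (n : ℂ)) * ∑ i, s i) ≤ (1 / (n : ℝ)) * ∑ i, φ t (s i)

/-- sup of φ(f,g) over the space (the supremum norm of the nonnegative function φ(f,g)). -/
noncomputable def supPhi {X : Type*} (φ : ℂ → ℂ → ℝ) (f g : X → ℂ) : ℝ :=
  ⨆ x, φ (f x) (g x)

noncomputable def rhoPlus {X : Type*} (φ : ℂ → ℂ → ℝ) (f g : X → ℂ) : ℝ :=
  supPhi φ f g + supPhi φ g f

noncomputable def rhoMax {X : Type*} (φ : ℂ → ℂ → ℝ) (f g : X → ℂ) : ℝ :=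
  max (supPhi φ f g) (supPhi φ g f)

noncomputable def rhoPlusScalar (φ : ℂ → ℂ → ℝ) (r s : ℂ) : ℝ := φ r s + φ s r

noncomputable def rhoMaxScalar (φ : ℂ → ℂ → ℝ) (r s : ℂ) : ℝ := max (φ r s) (φ s r)

/-- Generic ρ, with a Boolean selecting between ρ₊ (true) and ρ_max (false). -/
noncomputable def rhoGen {X : Type*} (c : Bool) (φ : ℂ → ℂ → ℝ) (f g : X → ℂ) : ℝ :=
  if c then rhoPlus φ f g else rhoMax φ f g

noncomputable def rhoGenScalar (c : Bool) (φ : ℂ → ℂ → ℝ) (r s : ℂ) : ℝ :=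
  if c then rhoPlusScalar φ r s else rhoMaxScalar φ r s

/-- `x₀` is a strong boundary point of `A ⊆ C₀(X)`. -/
def IsStrongBoundaryPoint {X : Type*} [TopologicalSpace X]
    (A : Set C₀(X, ℂ)) (x₀ : X) : Prop :=
  ∀ ε > (0 : ℝ), ∀ V ∈ 𝓝 x₀, ∃ f ∈ A, f x₀ = 1 ∧ ‖f‖ = 1 ∧
    ∀ x ∉ V, ‖f x‖ < ε

/-- V_{x₀}(A). -/
def Vset {X : Type*} [TopologicalSpace X] (A : Set C₀(X, ℂ)) (x₀ : X) : Set C₀(X, ℂ) :=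
  {f ∈ A | f x₀ = 1 ∧ ‖f‖ = 1}

/-- F_{x₀}(A). -/
def Fset {X : Type*} [TopologicalSpace X] (A : Set C₀(X, ℂ)) (x₀ : X) : Set C₀(X, ℂ) :=
  {f ∈ A | ‖f x₀‖ = 1 ∧ ‖f‖ = 1}

/-- The maximum modulus set M(f). -/
def maxSet {X : Type*} [TopologicalSpace X] (f : C₀(X, ℂ)) : Set X :=
  {x | ‖f x‖ = ‖f‖}

noncomputable instance instSeminormedAddCommGroupSubmoduleZeroAtInfty {X : Type*} [TopologicalSpace X]
    (𝒜 : Submodule ℂ C₀(X, ℂ)) : SeminormedAddCommGroup 𝒜 :=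
  Submodule.seminormedAddCommGroup 𝒜

noncomputable instance instSeminormedAddCommGroupStrongDualSubmoduleZeroAtInfty {X : Type*}
    [TopologicalSpace X] (𝒜 : Submodule ℂ C₀(X, ℂ)) : SeminormedAddCommGroup (StrongDual ℂ 𝒜) :=
  @ContinuousLinearMap.toSeminormedAddCommGroup ℂ ℂ 𝒜 ℂ _ _ _ _ _ _ (RingHom.id ℂ) _

/-- Evaluation at a point, as a continuous linear functional on a subspace of C₀(X). -/
noncomputable def evalDual {X : Type*} [TopologicalSpace X]
    (𝒜 : Submodule ℂ C₀(X, ℂ)) (x : X) : StrongDual ℂ 𝒜 :=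
  LinearMap.mkContinuous
    { toFun := fun f => (f : C₀(X, ℂ)) x
      map_add' := fun f g => rfl
      map_smul' := fun c f => rfl }
    1
    (fun f => by
      rw [one_mul, ← Submodule.norm_coe]
      exact ((f : C₀(X, ℂ)).toBCF.norm_coe_le_norm x).trans_eq
        ZeroAtInftyContinuousMap.norm_toBCF_eq_norm)

/-- `x` lies in the Choquet boundary of a subspace `𝒜` of `C₀(X)`: the evaluation functional is
an extreme point of the closed unit ball of the dual space. -/
def InChoquetBoundary {X : Type*} [TopologicalSpace X]
    (𝒜 : Submodule ℂ C₀(X, ℂ)) (x : X) : Prop :=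
  evalDual 𝒜 x ∈
    Set.extremePoints ℝ (Metric.closedBall (0 : StrongDual ℂ 𝒜) 1)

/-- A function algebra on `X`: a closed subalgebra of `C₀(X)` strongly separating points. -/
def IsFunctionAlgebra {X : Type*} [TopologicalSpace X]
    (𝒜 : NonUnitalSubalgebra ℂ C₀(X, ℂ)) : Prop :=
  IsClosed (𝒜 : Set C₀(X, ℂ)) ∧
  (∀ x y : X, x ≠ y → ∃ f ∈ 𝒜, f x ≠ f y) ∧
  (∀ x : X, ∃ g ∈ 𝒜, g x ≠ (0 : ℂ))

/-- `|A| ⊆ |𝒜|`. -/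
def ModulusSubset {X : Type*} [TopologicalSpace X]
    (A 𝒜 : Set C₀(X, ℂ)) : Prop :=
  ∀ f ∈ A, ∃ g ∈ 𝒜, ∀ x, ‖f x‖ = ‖g x‖

/-- The positive elements of a subset `S` of `C₀(X)`. -/
def posPart {X : Type*} [TopologicalSpace X] (S : Set C₀(X, ℂ)) : Set C₀(X, ℂ) :=
  {f ∈ S | ∀ x, ∃ r : ℝ, 0 ≤ r ∧ f x = r}

private lemma abs_ofReal_of_nonneg {r : ℝ} (hr : 0 ≤ r) : ‖(r : ℂ)‖ = r := by
  rw [Complex.norm_real, Real.norm_of_nonneg hr]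

private lemma phi_diag_mono (φ : ℂ → ℂ → ℝ) (hinc : IncProp φ) {a b : ℝ}
    (ha : 0 ≤ a) (hab : a ≤ b) : φ (a : ℂ) (a : ℂ) ≤ φ (b : ℂ) (b : ℂ) := by
  have hb : 0 ≤ b := ha.trans hab
  have h1 : ‖(a : ℂ)‖ ≤ ‖(b : ℂ)‖ := by
    rw [abs_ofReal_of_nonneg ha, abs_ofReal_of_nonneg hb]; exact hab
  exact ((hinc.1 a b a h1).1).trans ((hinc.1 a b b h1).2)

private lemma phi_diag_strict (φ : ℂ → ℂ → ℝ) (hinc : IncProp φ) {a b : ℝ}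
    (ha : 0 ≤ a) (hab : a < b) : φ (a : ℂ) (a : ℂ) < φ (b : ℂ) (b : ℂ) := by
  have hb : 0 < b := ha.trans_lt hab
  have h1 : ‖(a : ℂ)‖ < ‖(b : ℂ)‖ := by
    rw [abs_ofReal_of_nonneg ha, abs_ofReal_of_nonneg hb.le]; exact hab
  have hbne : (b : ℂ) ≠ 0 := by exact_mod_cast hb.ne'
  exact ((hinc.1 a b a h1.le).1).trans_lt ((hinc.2 a b b h1 hbne).2)

private lemma phi_diag_abs (φ : ℂ → ℂ → ℝ) (hinc : IncProp φ) (s : ℂ) :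
    φ s s = φ ((‖s‖ : ℝ) : ℂ) ((‖s‖ : ℝ) : ℂ) := by
  have h1 : ‖s‖ = ‖((‖s‖ : ℝ) : ℂ)‖ := by
    rw [abs_ofReal_of_nonneg (norm_nonneg s)]
  refine le_antisymm ?_ ?_
  · exact ((hinc.1 s _ s h1.le).1).trans ((hinc.1 s _ _ h1.le).2)
  · exact ((hinc.1 _ s _ h1.ge).1).trans ((hinc.1 _ s s h1.ge).2)

/-- For a nonempty domain, `supPhi φ f f = φ(‖f‖, ‖f‖)`. -/
private lemma supPhi_self {Z : Type*} [TopologicalSpace Z] [Nonempty Z]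
    (φ : ℂ → ℂ → ℝ) (hφc : Continuous fun p : ℂ × ℂ => φ p.1 p.2)
    (hinc : IncProp φ) (f : C₀(Z, ℂ)) :
    supPhi φ (fun x => f x) (fun x => f x) = φ ((‖f‖ : ℝ) : ℂ) ((‖f‖ : ℝ) : ℂ) := by
  set h : ℝ → ℝ := fun r => φ ((max r 0 : ℝ) : ℂ) ((max r 0 : ℝ) : ℂ) with hh
  have hmono : Monotone h := fun a b hab =>
    phi_diag_mono φ hinc (le_max_right a 0) (max_le_max hab le_rfl)
  have hcont : Continuous h := by
    have : Continuous fun r : ℝ => (((max r 0 : ℝ) : ℂ), ((max r 0 : ℝ) : ℂ)) :=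
      ((Complex.continuous_ofReal.comp ((continuous_id.max continuous_const)))).prodMk
        ((Complex.continuous_ofReal.comp ((continuous_id.max continuous_const))))
    exact hφc.comp this
  have hbdd : BddAbove (Set.range fun x => ‖f x‖) := by
    refine ⟨‖f‖, ?_⟩
    rintro r ⟨x, rfl⟩
    show ‖f x‖ ≤ ‖f‖
    exact (f.toBCF.norm_coe_le_norm x).trans_eq ZeroAtInftyContinuousMap.norm_toBCF_eq_norm
  have hnorm : ‖f‖ = ⨆ x, ‖f x‖ := by
    rw [← ZeroAtInftyContinuousMap.norm_toBCF_eq_norm,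
      BoundedContinuousFunction.norm_eq_iSup_norm]
    rfl
  have key : h (⨆ x, ‖f x‖) = ⨆ x, h (‖f x‖) :=
    Monotone.map_ciSup_of_continuousAt (hcont.continuousAt) hmono hbdd
  have hterm : ∀ x, φ (f x) (f x) = h (‖f x‖) := by
    intro x
    rw [hh]
    simp only [max_eq_left (norm_nonneg (f x))]
    exact phi_diag_abs φ hinc (f x)
  have hnn : max ‖f‖ 0 = ‖f‖ := max_eq_left (norm_nonneg f)
  calc supPhi φ (fun x => f x) (fun x => f x) = ⨆ x, φ (f x) (f x) := rfl
    _ = ⨆ x, h (‖f x‖) := by simp only [hterm]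
    _ = h (⨆ x, ‖f x‖) := key.symm
    _ = h ‖f‖ := by rw [← hnorm]
    _ = φ ((‖f‖ : ℝ) : ℂ) ((‖f‖ : ℝ) : ℂ) := by rw [hh]; simp only [hnn]

private lemma norm_eq_zero_of_supPhi {Z : Type*} [TopologicalSpace Z] [Nonempty Z]
    (φ : ℂ → ℂ → ℝ) (hφc : Continuous fun p : ℂ × ℂ => φ p.1 p.2)
    (hφ0 : ∀ s t : ℂ, 0 ≤ φ s t) (hinc : IncProp φ) (g : C₀(Z, ℂ))
    (hg : supPhi φ (fun x => g x) (fun x => g x) = 0) : ‖g‖ = 0 := by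
  by_contra hne
  have hpos : 0 < ‖g‖ := lt_of_le_of_ne (norm_nonneg g) (Ne.symm hne)
  have h1 := supPhi_self φ hφc hinc g
  rw [hg] at h1
  have h2 : φ ((0 : ℝ) : ℂ) ((0 : ℝ) : ℂ) < φ ((‖g‖ : ℝ) : ℂ) ((‖g‖ : ℝ) : ℂ) :=
    phi_diag_strict φ hinc le_rfl hpos
  rw [← h1] at h2
  exact absurd h2 (not_lt.mpr (by exact_mod_cast hφ0 0 0))

private lemma norm_eq_zero_of_isEmpty {Z : Type*} [TopologicalSpace Z] [IsEmpty Z]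
    (f : C₀(Z, ℂ)) : ‖f‖ = 0 := by
  have : f = 0 := ZeroAtInftyContinuousMap.ext fun x => (IsEmpty.false x).elim
  rw [this, norm_zero]

theorem stmt7 {X Y : Type*} [TopologicalSpace X] [LocallyCompactSpace X] [T2Space X] [TopologicalSpace Y] [LocallyCompactSpace Y] [T2Space Y]
    (φ : ℂ → ℂ → ℝ) (hφc : Continuous fun p : ℂ × ℂ => φ p.1 p.2)
    (hφ0 : ∀ s t : ℂ, 0 ≤ φ s t) (hinc : IncProp φ) (c : Bool)
    (A : Set C₀(X, ℂ)) (B : Set C₀(Y, ℂ))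
    (T : C₀(X, ℂ) → C₀(Y, ℂ)) (hTmaps : Set.MapsTo T A B)
    (hT : ∀ f ∈ A, ∀ g ∈ A,
      rhoGen c φ (fun y => T f y) (fun y => T g y) =
        rhoGen c φ (fun x => f x) (fun x => g x)) :
    ∀ f ∈ A, ‖T f‖ = ‖f‖ := by
  intro f hf
  have key := hT f hf f hf
  have hsup : supPhi φ (fun y => T f y) (fun y => T f y) =
      supPhi φ (fun x => f x) (fun x => f x) := by
    cases c <;> simp only [rhoGen, rhoPlus, rhoMax, if_true, if_false, Bool.false_eq_true,
      max_self] at key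
    · exact key
    · linarith
  -- helper facts about strict monotonicity along the diagonal
  have hinj : ∀ a b : ℝ, 0 ≤ a → 0 ≤ b →
      φ ((a : ℝ) : ℂ) ((a : ℝ) : ℂ) = φ ((b : ℝ) : ℂ) ((b : ℝ) : ℂ) → a = b := by
    intro a b ha hb hab
    rcases lt_trichotomy a b with h | h | h
    · exact absurd hab (phi_diag_strict φ hinc ha h).ne
    · exact h
    · exact absurd hab.symm (phi_diag_strict φ hinc hb h).ne
  rcases isEmpty_or_nonempty X with hX | hX <;> rcases isEmpty_or_nonempty Y with hY | hY
  · rw [norm_eq_zero_of_isEmpty (T f), norm_eq_zero_of_isEmpty f]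
  · -- X empty, Y nonempty
    have hsX : supPhi φ (fun x => f x) (fun x => f x) = 0 := Real.iSup_of_isEmpty _
    rw [hsX] at hsup
    have hTf0 : ‖T f‖ = 0 := norm_eq_zero_of_supPhi φ hφc hφ0 hinc (T f) hsup
    rw [hTf0, norm_eq_zero_of_isEmpty f]
  · -- X nonempty, Y empty
    have hsY : supPhi φ (fun y => T f y) (fun y => T f y) = 0 := Real.iSup_of_isEmpty _
    rw [hsY] at hsup
    have hf0 : ‖f‖ = 0 := norm_eq_zero_of_supPhi φ hφc hφ0 hinc f hsup.symm
    rw [hf0, norm_eq_zero_of_isEmpty (T f)]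
  · rw [supPhi_self φ hφc hinc (T f), supPhi_self φ hφc hinc f] at hsup
    exact hinj _ _ (norm_nonneg _) (norm_nonneg _) hsup
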